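/- Let X = {(x, y⁻) ∈ ℤ^n_{≥0} × ℝ_{≥0} : a^T x ≤ b + y⁻}, with f = b − ⌊b⌋ ∈ (0,1) and f_j = a_j − ⌊a_j⌋. Let c_j ≤ ⌊a_j⌋ + max(f_j − f, 0)/(1−f) for all j and d ≥ ⌊b⌋. Then ∑_j c_j x_j − y⁻/(1−f) ≤ d is valid for X. -/

import Mathlib

/-- Core single-row MIR rounding lemma. -/
lemma mir_core (b f y : ℝ) (z : ℤ) (hf : f = b - ⌊b⌋) (hf0 : 0 < f) (hf1 : f < 1)
    (hy : 0 ≤ y) (h : (z : ℝ) ≤ b + y) : (z : ℝ) ≤ (⌊b⌋ : ℝ) + y / (1 - f) := by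
  have h1f : 0 < 1 - f := by linarith
  rcases le_or_gt (z : ℝ) (⌊b⌋ : ℝ) with hle | hgt
  · have : 0 ≤ y / (1 - f) := div_nonneg hy h1f.le
    linarith
  · have hz1 : (⌊b⌋ : ℝ) + 1 ≤ (z : ℝ) := by
      have : ⌊b⌋ < z := by exact_mod_cast hgt
      exact_mod_cast Int.lt_iff_add_one_le.mp this
    have hb : b = (⌊b⌋ : ℝ) + f := by rw [hf]; ring
    have hy' : (z : ℝ) - (⌊b⌋ : ℝ) - f ≤ y := by linarith
    have hdiv : (z : ℝ) - (⌊b⌋ : ℝ) ≤ y / (1 - f) := by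
      rw [le_div_iff₀ h1f]
      nlinarith
    linarith

/-- Safe weakening of the multi-variable MIR cut: rounding the cut
coefficients down and the right-hand side up preserves validity. -/
theorem stmt_17 (n : ℕ) (a : Fin n → ℝ) (b : ℝ)
    (f : ℝ) (hf : f = b - ⌊b⌋) (hf0 : 0 < f) (hf1 : f < 1)
    (c : Fin n → ℝ) (d : ℝ)
    (hc : ∀ j, c j ≤ (⌊a j⌋ : ℝ) + max (a j - ⌊a j⌋ - f) 0 / (1 - f))
    (hd : (⌊b⌋ : ℝ) ≤ d)
    (x : Fin n → ℤ) (hx : ∀ j, 0 ≤ x j)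
    (ym : ℝ) (hym : 0 ≤ ym)
    (hfeas : ∑ j, a j * (x j : ℝ) ≤ b + ym) :
    ∑ j, c j * (x j : ℝ) - ym / (1 - f) ≤ d := by
  have h1f : 0 < 1 - f := by linarith
  set r : Fin n → ℤ := fun j => if f < a j - ⌊a j⌋ then ⌊a j⌋ + 1 else ⌊a j⌋ with hr
  set g : Fin n → ℝ := fun j => if f < a j - ⌊a j⌋ then 1 - (a j - ⌊a j⌋) else 0 with hg
  have hF1 : ∀ j, a j - ⌊a j⌋ < 1 := by
    intro j
    have := Int.fract_lt_one (a j)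
    rwa [Int.fract] at this
  have hxR : ∀ j, (0 : ℝ) ≤ (x j : ℝ) := fun j => by exact_mod_cast hx j
  have hgnn : ∀ j, 0 ≤ g j := by
    intro j
    simp only [hg]
    split <;> simp_all <;> linarith [hF1 j]
  -- pointwise estimate for the cut coefficients
  have key : ∀ j, c j * (x j : ℝ) ≤ ((r j : ℝ)) * x j - (g j * x j) / (1 - f) := by
    intro j
    have hcj := hc j
    by_cases hj : f < a j - ⌊a j⌋
    · simp only [hr, hg, if_pos hj]
      have hmax : max (a j - ⌊a j⌋ - f) 0 = a j - ⌊a j⌋ - f := max_eq_left (by linarith)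
      rw [hmax] at hcj
      have hco : c j ≤ (((⌊a j⌋ + 1 : ℤ) : ℝ)) - (1 - (a j - ⌊a j⌋)) / (1 - f) := by
        have hrew : (a j - ⌊a j⌋ - f) / (1 - f) = 1 - (1 - (a j - ⌊a j⌋)) / (1 - f) := by
          field_simp
          ring
        push_cast
        rw [hrew] at hcj
        linarith
      calc c j * (x j : ℝ)
          ≤ ((((⌊a j⌋ + 1 : ℤ) : ℝ)) - (1 - (a j - ⌊a j⌋)) / (1 - f)) * x j :=
            mul_le_mul_of_nonneg_right hco (hxR j)
        _ = (((⌊a j⌋ + 1 : ℤ) : ℝ)) * x j - ((1 - (a j - ⌊a j⌋)) * x j) / (1 - f) := by ring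
    · simp only [hr, hg, if_neg hj]
      have hmax : max (a j - ⌊a j⌋ - f) 0 = 0 := max_eq_right (by linarith [not_lt.mp hj])
      rw [hmax] at hcj
      simp only [zero_div, add_zero] at hcj
      have : c j * (x j : ℝ) ≤ (⌊a j⌋ : ℝ) * x j := mul_le_mul_of_nonneg_right hcj (hxR j)
      simpa using this
  -- sum up
  have hsum : ∑ j, c j * (x j : ℝ) ≤
      (∑ j, (r j : ℝ) * x j) - (∑ j, g j * x j) / (1 - f) := by
    calc ∑ j, c j * (x j : ℝ)
        ≤ ∑ j, ((r j : ℝ) * x j - (g j * x j) / (1 - f)) :=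
          Finset.sum_le_sum fun j _ => key j
      _ = (∑ j, (r j : ℝ) * x j) - (∑ j, g j * x j) / (1 - f) := by
          rw [Finset.sum_sub_distrib, Finset.sum_div]
  set S : ℝ := ∑ j, g j * x j with hS
  have hSnn : 0 ≤ S := Finset.sum_nonneg fun j _ => mul_nonneg (hgnn j) (hxR j)
  set z : ℤ := ∑ j, r j * x j with hz
  have hzcast : (z : ℝ) = ∑ j, (r j : ℝ) * x j := by push_cast [hz]; rfl
  have hzb : (z : ℝ) ≤ b + (ym + S) := by
    have hpt : ∀ j, (r j : ℝ) * x j ≤ a j * x j + g j * x j := by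
      intro j
      by_cases hj : f < a j - ⌊a j⌋
      · simp only [hr, hg, if_pos hj]
        push_cast
        ring_nf
        nlinarith [hxR j]
      · simp only [hr, hg, if_neg hj]
        have : (⌊a j⌋ : ℝ) ≤ a j := Int.floor_le (a j)
        nlinarith [hxR j]
    have : ∑ j, (r j : ℝ) * x j ≤ ∑ j, (a j * x j + g j * x j) :=
      Finset.sum_le_sum fun j _ => hpt j
    rw [Finset.sum_add_distrib] at this
    rw [hzcast]
    linarith
  have hcore := mir_core b f (ym + S) z hf hf0 hf1 (by linarith) hzb
  rw [add_div] at hcore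
  rw [hzcast] at hcore
  linarith [hsum]
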